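/- Let S be a random walk on a Cayley graph G of a finitely generated group, started at the identity o, such that almost surely lim inf_{t→∞} d_G(o, S_t)/t > 0. Let L_r = |{t ≥ 0 : S_t ∈ B(o,r)}|. Then there is a constant C < ∞ such that for all r ≥ 1, E[L_r] ≤ C · r. -/

import Mathlib

set_option linter.unusedSectionVars false
set_option maxHeartbeats 1000000


open MeasureTheory ProbabilityTheory Filter Topology ENNReal

noncomputable section

variable {Γ : Type*} [Group Γ]

/-- The ball `B(o,r)` of radius `r` around the identity `o` in the word metric of the
(symmetrized) generating set `X` of a Cayley graph. -/
def wordBall (X : Set Γ) (r : ℝ) : Set Γ :=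
  {g | ∃ l : List Γ, (∀ x ∈ l, x ∈ X ∨ x⁻¹ ∈ X) ∧ (l.length : ℝ) ≤ r ∧ l.prod = g}

/-- The word norm `|g| = d_G(o, g)`, the graph distance from the identity to `g` in the
Cayley graph of `(Γ, X)`. -/
def wordNorm (X : Set Γ) (g : Γ) : ℕ := sInf {n : ℕ | g ∈ wordBall X n}

/-- `S` is a random walk on `Γ` started at the identity with i.i.d. increments of law `ν`:
each increment `S_t⁻¹ S_{t+1}` has law `ν`, and the increments are independent. -/
def IsRandomWalk {Ω : Type*} [MeasurableSpace Ω] [MeasurableSpace Γ]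
    (P : Measure Ω) (S : ℕ → Ω → Γ) (ν : Γ → ℝ≥0∞) : Prop :=
  (∀ t, Measurable (S t)) ∧ (∀ ω, S 0 ω = 1) ∧ (∑' g : Γ, ν g = 1) ∧
    (∀ t g, P {ω | (S t ω)⁻¹ * S (t + 1) ω = g} = ν g) ∧
    iIndepFun (fun t ω => (S t ω)⁻¹ * S (t + 1) ω) P

/-- The occupation time `L = |{t ≥ 0 : S_t ∈ B}|` of a set `B` by the trajectory `S · ω`. -/
def occupation (B : Set Γ) {Ω : Type*} (S : ℕ → Ω → Γ) (ω : Ω) : ℕ∞ :=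
  {t : ℕ | S t ω ∈ B}.encard

namespace RWaux

variable {X : Set Γ}

lemma wordBall_mono {r r' : ℝ} (h : r ≤ r') : wordBall X r ⊆ wordBall X r' := by
  rintro g ⟨l, h1, h2, h3⟩; exact ⟨l, h1, h2.trans h, h3⟩

lemma exists_word (hXgen : Subgroup.closure X = ⊤) (g : Γ) :
    ∃ l : List Γ, (∀ x ∈ l, x ∈ X ∨ x⁻¹ ∈ X) ∧ l.prod = g := by
  have hg : g ∈ (Subgroup.closure X).toSubmonoid := by rw [hXgen]; trivial
  rw [Subgroup.closure_toSubmonoid] at hg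
  obtain ⟨l, hl, hp⟩ := Submonoid.exists_list_of_mem_closure hg
  exact ⟨l, fun x hx => by rcases hl x hx with h | h; exact Or.inl h; exact Or.inr (Set.mem_inv.mp h), hp⟩

lemma nonempty_norm_set (hXgen : Subgroup.closure X = ⊤) (g : Γ) :
    {n : ℕ | g ∈ wordBall X n}.Nonempty := by
  obtain ⟨l, hl, hp⟩ := exists_word hXgen g
  exact ⟨l.length, l, hl, le_refl _, hp⟩

lemma mem_wordBall_wordNorm (hXgen : Subgroup.closure X = ⊤) (g : Γ) :
    g ∈ wordBall X (wordNorm X g) :=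
  Nat.sInf_mem (nonempty_norm_set hXgen g)

lemma wordNorm_le_of_mem {g : Γ} {r : ℝ} (h : g ∈ wordBall X r) :
    (wordNorm X g : ℝ) ≤ r := by
  obtain ⟨l, h1, h2, h3⟩ := h
  have : wordNorm X g ≤ l.length :=
    Nat.sInf_le ⟨l, h1, le_refl _, h3⟩
  exact le_trans (Nat.cast_le.mpr this) h2

lemma mem_wordBall_of_norm_le (hXgen : Subgroup.closure X = ⊤) {g : Γ} {r : ℝ}
    (h : (wordNorm X g : ℝ) ≤ r) : g ∈ wordBall X r :=
  wordBall_mono h (mem_wordBall_wordNorm hXgen g)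

lemma wordNorm_mul_le (hXgen : Subgroup.closure X = ⊤) (g h : Γ) :
    wordNorm X (g * h) ≤ wordNorm X g + wordNorm X h := by
  obtain ⟨l1, a1, b1, c1⟩ := mem_wordBall_wordNorm hXgen g
  obtain ⟨l2, a2, b2, c2⟩ := mem_wordBall_wordNorm hXgen h
  have : g * h ∈ wordBall X ((wordNorm X g + wordNorm X h : ℕ) : ℝ) := by
    refine ⟨l1 ++ l2, ?_, ?_, by rw [List.prod_append, c1, c2]⟩
    · intro x hx; rcases List.mem_append.mp hx with h' | h'
      exacts [a1 x h', a2 x h']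
    · rw [List.length_append]; push_cast at b1 b2 ⊢; linarith
  have := wordNorm_le_of_mem this
  exact_mod_cast this

lemma wordNorm_inv_le (hXgen : Subgroup.closure X = ⊤) (g : Γ) :
    wordNorm X g⁻¹ ≤ wordNorm X g := by
  obtain ⟨l, a, b, c⟩ := mem_wordBall_wordNorm hXgen g
  have : g⁻¹ ∈ wordBall X ((wordNorm X g : ℕ) : ℝ) := by
    refine ⟨(l.map (·⁻¹)).reverse, ?_, ?_, ?_⟩
    · intro x hx
      rw [List.mem_reverse, List.mem_map] at hx
      obtain ⟨y, hy, rfl⟩ := hx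
      rcases a y hy with h | h
      · exact Or.inr (by simpa using h)
      · exact Or.inl h
    · simpa using b
    · rw [List.prod_reverse_noncomm]
      simp [c]
  have := wordNorm_le_of_mem this
  exact_mod_cast this

lemma countable_of_gen (X : Finset Γ) (hXgen : Subgroup.closure (X : Set Γ) = ⊤) :
    Countable Γ := by
  classical
  set Y : Set Γ := (X : Set Γ) ∪ (X : Set Γ)⁻¹ with hY
  have hYc : Y.Countable := ((X.finite_toSet).union (X.finite_toSet.inv)).countable
  haveI : Countable Y := hYc.to_subtype
  have hsurj : Function.Surjective (fun l : List Y => (l.map Subtype.val).prod) := by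
    intro g
    obtain ⟨l, hl, hp⟩ := exists_word hXgen g
    refine ⟨l.attach.map (fun x => ⟨x.1, ?_⟩), ?_⟩
    · rcases hl x.1 x.2 with h | h
      · exact Or.inl h
      · exact Or.inr (Set.mem_inv.mpr h)
    · simpa [List.map_map, Function.comp] using hp
  exact hsurj.countable

section Meas

variable [MeasurableSpace Γ] [MeasurableSingletonClass Γ] [Countable Γ]

lemma measurableSet_all (A : Set Γ) : MeasurableSet A :=
  (Set.to_countable A).measurableSet

lemma measurable_inv_mul {Ω : Type*} [MeasurableSpace Ω] {f g : Ω → Γ}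
    (hf : Measurable f) (hg : Measurable g) :
    Measurable (fun ω => (f ω)⁻¹ * g ω) :=
  (measurable_of_countable (fun p : Γ × Γ => p.1⁻¹ * p.2)).comp (hf.prodMk hg)

variable {Ω : Type*} [MeasurableSpace Ω] {S : ℕ → Ω → Γ}

/-- increments -/
def Xinc (S : ℕ → Ω → Γ) (j : ℕ) (ω : Ω) : Γ := (S j ω)⁻¹ * S (j + 1) ω

lemma prod_increments (t s : ℕ) (ω : Ω) :
    (S t ω)⁻¹ * S (t + s) ω
      = ((List.range s).map (fun i => Xinc S (t + i) ω)).prod := by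
  induction s with
  | zero => simp
  | succ s ih =>
      rw [List.range_succ, List.map_append, List.prod_append]
      simp only [List.map_cons, List.map_nil, List.prod_cons, List.prod_nil, mul_one]
      rw [← ih, Xinc, ← add_assoc]
      group

lemma S_eq_prod (hS0 : ∀ ω, S 0 ω = 1) (t : ℕ) (ω : Ω) :
    S t ω = ((List.range t).map (fun i => Xinc S i ω)).prod := by
  have := prod_increments (S := S) 0 t ω
  simpa [hS0 ω] using this

end Meas

section Prob

variable [MeasurableSpace Γ] [MeasurableSingletonClass Γ] [Countable Γ]
variable {Ω : Type*} [MeasurableSpace Ω] {P : Measure Ω} [IsProbabilityMeasure P]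
variable {S : ℕ → Ω → Γ} {ν : Γ → ℝ≥0∞}

/-- the vector of `n` increments starting at time `t` -/
def Vvec (S : ℕ → Ω → Γ) (t n : ℕ) (ω : Ω) : Fin n → Γ := fun i => Xinc S (t + i) ω

lemma measurable_Xinc (hmeas : ∀ t, Measurable (S t)) (j : ℕ) :
    Measurable (Xinc S j) :=
  measurable_inv_mul (hmeas j) (hmeas (j + 1))

lemma measurable_Vvec (hmeas : ∀ t, Measurable (S t)) (t n : ℕ) :
    Measurable (Vvec S t n) :=
  measurable_pi_iff.mpr fun i => measurable_Xinc hmeas (t + i)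

lemma fdd (hwalk : IsRandomWalk P S ν) (t n : ℕ) (v : Fin n → Γ) :
    P {ω | Vvec S t n ω = v} = ∏ i, ν (v i) := by
  classical
  obtain ⟨hmeas, hS0, hν1, hν, hind⟩ := hwalk
  set sets : ℕ → Set Γ := fun j =>
    if h : t ≤ j ∧ j - t < n then {v ⟨j - t, h.2⟩} else Set.univ with hsets
  have key := hind.measure_inter_preimage_eq_mul
    ((Finset.range n).image (fun i => t + i)) (sets := sets)
    (fun i _ => measurableSet_all _)
  have hinj : Function.Injective (fun i : ℕ => t + i) := fun a b h => by
    simpa using h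
  have hset_eq : ∀ (i : ℕ) (hi : i < n), sets (t + i) = {v ⟨i, hi⟩} := by
    intro i hi
    have h1 : t ≤ t + i ∧ t + i - t < n := by omega
    have h2 : (⟨t + i - t, h1.2⟩ : Fin n) = ⟨i, hi⟩ := by
      apply Fin.ext
      simp
    rw [hsets]
    simp only []
    rw [dif_pos h1, h2]
  have hE : (⋂ j ∈ (Finset.range n).image (fun i => t + i),
      (fun ω => (S j ω)⁻¹ * S (j + 1) ω) ⁻¹' sets j) = {ω | Vvec S t n ω = v} := by
    ext ω
    simp only [Set.mem_iInter, Finset.mem_image, Finset.mem_range, Set.mem_preimage,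
      Set.mem_setOf_eq]
    constructor
    · intro h
      funext i
      have := h (t + i.1) ⟨i.1, i.2, rfl⟩
      rw [hset_eq i.1 i.2] at this
      simpa [Vvec, Xinc] using this
    · rintro h j ⟨i, hi, rfl⟩
      rw [hset_eq i hi]
      have : Xinc S (t + i) ω = v ⟨i, hi⟩ := congrFun h ⟨i, hi⟩
      simpa [Xinc] using this
  rw [hE] at key
  rw [key, Finset.prod_image (fun a _ b _ h => hinj h)]
  set w : ℕ → ℝ≥0∞ := fun i => if h : i < n then ν (v ⟨i, h⟩) else 1 with hw
  have step1 : ∀ x ∈ Finset.range n,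
      P ((fun ω => (S (t + x) ω)⁻¹ * S (t + x + 1) ω) ⁻¹' sets (t + x)) = w x := by
    intro x hx
    rw [Finset.mem_range] at hx
    rw [hset_eq x hx, hw]
    simp only [dif_pos hx]
    rw [← hν (t + x) (v ⟨x, hx⟩)]
    rfl
  rw [Finset.prod_congr rfl step1, ← Fin.prod_univ_eq_prod_range w n]
  exact Finset.prod_congr rfl fun i _ => by simp [hw]

lemma cylinder_shift (hwalk : IsRandomWalk P S ν) (t n : ℕ) (F : Set (Fin n → Γ)) :
    P (Vvec S t n ⁻¹' F) = P (Vvec S 0 n ⁻¹' F) := by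
  have key : ∀ s : ℕ, P (Vvec S s n ⁻¹' F) = ∑' v : F, ∏ i, ν ((v : Fin n → Γ) i) := by
    intro s
    have hU : Vvec S s n ⁻¹' F = ⋃ v : F, Vvec S s n ⁻¹' {(v : Fin n → Γ)} := by
      ext ω; simp
    rw [hU, measure_iUnion]
    · exact tsum_congr fun v => fdd hwalk s n v
    · intro v w hvw
      simp only [Function.onFun, Set.disjoint_left]
      intro ω hv hw
      simp only [Set.mem_preimage, Set.mem_singleton_iff] at hv hw
      exact hvw (Subtype.ext (hv.symm.trans hw))
    · intro v
      exact (measurable_Vvec hwalk.1 s n) (Set.to_countable _).measurableSet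
  rw [key t, key 0]

lemma indep_block (hwalk : IsRandomWalk P S ν) (t n : ℕ) (B : Set Γ)
    (F : Set (Fin n → Γ)) :
    P (S t ⁻¹' B ∩ Vvec S t n ⁻¹' F) = P (S t ⁻¹' B) * P (Vvec S t n ⁻¹' F) := by
  classical
  obtain ⟨hmeas, hS0, hν1, hν, hind⟩ := hwalk
  set A : Finset ℕ := Finset.range t with hA
  set T : Finset ℕ := (Finset.range n).image (fun i => t + i) with hT
  have hdisj : Disjoint A T := by
    rw [Finset.disjoint_left]
    intro a ha hb
    rw [hA, Finset.mem_range] at ha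
    rw [hT, Finset.mem_image] at hb
    obtain ⟨i, _, rfl⟩ := hb
    omega
  have hIF := hind.indepFun_finset A T hdisj (fun i => measurable_Xinc hmeas i)
  have hmemT : ∀ i : Fin n, t + (i : ℕ) ∈ T := fun i => by
    rw [hT]
    exact Finset.mem_image.mpr ⟨(i : ℕ), Finset.mem_range.mpr i.2, rfl⟩
  set φ : (↥A → Γ) → Γ :=
    fun u => ((List.range t).map (fun i => if h : i ∈ A then u ⟨i, h⟩ else 1)).prod with hφdef
  set ψ : (↥T → Γ) → (Fin n → Γ) :=
    fun u i => u ⟨t + (i : ℕ), hmemT i⟩ with hψdef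
  have hφ : Measurable φ := measurable_of_countable _
  have hψ : Measurable ψ := measurable_of_countable _
  have hcomp := (hIF.comp hφ hψ : IndepFun _ _ P)
  have h1 : (φ ∘ fun ω (i : ↥A) => (S (i : ℕ) ω)⁻¹ * S ((i : ℕ) + 1) ω) = S t := by
    funext ω
    rw [Function.comp_apply, S_eq_prod hS0 t ω, hφdef]
    simp only []
    congr 1
    refine List.map_congr_left fun i hi => ?_
    rw [List.mem_range] at hi
    rw [dif_pos (by rw [hA]; exact Finset.mem_range.mpr hi)]
    rfl
  have h2 : (ψ ∘ fun ω (i : ↥T) => (S (i : ℕ) ω)⁻¹ * S ((i : ℕ) + 1) ω) = Vvec S t n := rfl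
  rw [h1, h2] at hcomp
  exact hcomp.measure_inter_preimage_eq_mul B F (measurableSet_all B)
    (Set.to_countable F).measurableSet

/-- partial products of a finite word -/
def pprod {n : ℕ} (v : Fin n → Γ) (s : ℕ) : Γ :=
  ((List.range s).map (fun i => if h : i < n then v ⟨i, h⟩ else 1)).prod

lemma pprod_Vvec (t n : ℕ) (ω : Ω) {s : ℕ} (hs : s ≤ n) :
    pprod (Vvec S t n ω) s = (S t ω)⁻¹ * S (t + s) ω := by
  rw [prod_increments t s ω, pprod]
  congr 1
  refine List.map_congr_left fun i hi => ?_
  rw [List.mem_range] at hi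
  rw [dif_pos (by omega : i < n)]
  rfl

lemma master (hwalk : IsRandomWalk P S ν) (B : Set Γ) (Q : ℕ → Γ → Prop) (t : ℕ) :
    P ({ω | S t ω ∈ B} ∩ {ω | ∀ s, Q s ((S t ω)⁻¹ * S (t + s) ω)})
      = P {ω | S t ω ∈ B} * P {ω | ∀ s, Q s (S s ω)} := by
  classical
  have hmeas := hwalk.1
  have hS0 := hwalk.2.1
  set Fn : (n : ℕ) → Set (Fin n → Γ) :=
    fun n => {v | ∀ s : Fin n, Q s (pprod v s)} with hFn
  have hpre : ∀ (u n : ℕ),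
      Vvec S u n ⁻¹' Fn n = {ω | ∀ s, s < n → Q s ((S u ω)⁻¹ * S (u + s) ω)} := by
    intro u n
    ext ω
    simp only [Set.mem_preimage, hFn, Set.mem_setOf_eq]
    constructor
    · intro h s hs
      have := h ⟨s, hs⟩
      rwa [pprod_Vvec u n ω (le_of_lt hs)] at this
    · intro h s
      rw [pprod_Vvec u n ω (le_of_lt s.2)]
      exact h s s.2
  -- measurability
  have hDmeas : ∀ (u n : ℕ), MeasurableSet (Vvec S u n ⁻¹' Fn n) :=
    fun u n => (measurable_Vvec hmeas u n) (Set.to_countable _).measurableSet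
  have hBmeas : MeasurableSet {ω | S t ω ∈ B} := hmeas t (measurableSet_all B)
  -- limits
  have hanti : ∀ u : ℕ, Antitone (fun n => Vvec S u n ⁻¹' Fn n) := by
    intro u m n hmn
    simp only [hpre]
    intro ω hω s hs
    exact hω s (lt_of_lt_of_le hs hmn)
  have hint : ∀ u : ℕ,
      (⋂ n, Vvec S u n ⁻¹' Fn n) = {ω | ∀ s, Q s ((S u ω)⁻¹ * S (u + s) ω)} := by
    intro u
    ext ω
    simp only [Set.mem_iInter, hpre, Set.mem_setOf_eq]
    exact ⟨fun h s => h (s + 1) s (by omega), fun h n s _ => h s⟩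
  have lim1 : Filter.Tendsto (fun n => P ({ω | S t ω ∈ B} ∩ Vvec S t n ⁻¹' Fn n))
      Filter.atTop (𝓝 (P ({ω | S t ω ∈ B} ∩ {ω | ∀ s, Q s ((S t ω)⁻¹ * S (t + s) ω)}))) := by
    have := tendsto_measure_iInter_atTop (μ := P)
      (s := fun n => {ω | S t ω ∈ B} ∩ Vvec S t n ⁻¹' Fn n)
      (fun n => (hBmeas.inter (hDmeas t n)).nullMeasurableSet)
      (fun m n hmn => Set.inter_subset_inter_right _ (hanti t hmn))
      ⟨0, measure_ne_top P _⟩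
    rwa [← Set.inter_iInter, hint t] at this
  have lim2 : Filter.Tendsto (fun n => P ({ω | S t ω ∈ B} ∩ Vvec S t n ⁻¹' Fn n))
      Filter.atTop (𝓝 (P {ω | S t ω ∈ B} * P {ω | ∀ s, Q s (S s ω)})) := by
    have h0 : Filter.Tendsto (fun n => P (Vvec S 0 n ⁻¹' Fn n)) Filter.atTop
        (𝓝 (P {ω | ∀ s, Q s (S s ω)})) := by
      have := tendsto_measure_iInter_atTop (μ := P)
        (s := fun n => Vvec S 0 n ⁻¹' Fn n)
        (fun n => (hDmeas 0 n).nullMeasurableSet)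
        (hanti 0) ⟨0, measure_ne_top P _⟩
      rw [hint 0] at this
      have heq : {ω | ∀ s, Q s ((S 0 ω)⁻¹ * S (0 + s) ω)} = {ω | ∀ s, Q s (S s ω)} := by
        ext ω
        simp [hS0 ω]
      rwa [heq] at this
    have heqn : ∀ n, P ({ω | S t ω ∈ B} ∩ Vvec S t n ⁻¹' Fn n)
        = P {ω | S t ω ∈ B} * P (Vvec S 0 n ⁻¹' Fn n) := by
      intro n
      have := indep_block hwalk t n B (Fn n)
      rw [show S t ⁻¹' B = {ω | S t ω ∈ B} from rfl] at this
      rw [this, cylinder_shift hwalk t n (Fn n)]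
    simp only [heqn]
    exact ENNReal.Tendsto.const_mul h0 (Or.inr (measure_ne_top P _))
  exact tendsto_nhds_unique lim1 lim2

end Prob

section Occ

variable [MeasurableSpace Γ] [MeasurableSingletonClass Γ] [Countable Γ]
variable {Ω : Type*} [MeasurableSpace Ω] {P : Measure Ω} [IsProbabilityMeasure P]
variable {S : ℕ → Ω → Γ}

lemma encard_eq_tsum (A : Set ℕ) :
    (A.encard : ℝ≥0∞) = ∑' t : ℕ, A.indicator (fun _ => (1 : ℝ≥0∞)) t := by
  rw [← ENNReal.tsum_set_one, tsum_subtype A (fun _ => (1 : ℝ≥0∞))]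

lemma lintegral_occupation (hmeas : ∀ t, Measurable (S t)) (B : Set Γ) :
    ∫⁻ ω, ((occupation B S ω : ℕ∞) : ℝ≥0∞) ∂P = ∑' t : ℕ, P {ω | S t ω ∈ B} := by
  have h1 : ∀ ω, ((occupation B S ω : ℕ∞) : ℝ≥0∞)
      = ∑' t : ℕ, ({ω' | S t ω' ∈ B}).indicator (fun _ => (1 : ℝ≥0∞)) ω := by
    intro ω
    rw [occupation, encard_eq_tsum]
    refine tsum_congr fun t => ?_
    by_cases h : S t ω ∈ B <;>
      simp [Set.indicator_apply, h]
  simp_rw [h1]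
  rw [lintegral_tsum (f := fun t => ({ω' | S t ω' ∈ B}).indicator (fun _ => (1 : ℝ≥0∞)))
    (fun t => ((measurable_const.indicator
      (show MeasurableSet {ω' | S t ω' ∈ B} from hmeas t (measurableSet_all B)))).aemeasurable)]
  exact tsum_congr fun t => lintegral_indicator_one (hmeas t (measurableSet_all B))

end Occ

section Speed

variable [MeasurableSpace Γ] [MeasurableSingletonClass Γ] [Countable Γ]
variable {Ω : Type*} [MeasurableSpace Ω] {P : Measure Ω} [IsProbabilityMeasure P]
variable {S : ℕ → Ω → Γ} {X : Set Γ}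

lemma exists_speed_event (hmeas : ∀ t, Measurable (S t))
    (hspeed : ∀ᵐ ω ∂P,
      0 < Filter.atTop.liminf (fun t : ℕ => (wordNorm X (S t ω) : ℝ) / t)) :
    ∃ n : ℕ, 1 ≤ n ∧
      2⁻¹ ≤ P {ω | ∀ s : ℕ, (s : ℝ) / n - n ≤ (wordNorm X (S s ω) : ℝ)} := by
  classical
  set G : ℕ → Set Ω := fun n =>
    {ω | ∀ s : ℕ, (s : ℝ) / (n + 1) - (n + 1) ≤ (wordNorm X (S s ω) : ℝ)} with hG
  have hGmeas : ∀ n, MeasurableSet (G n) := by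
    intro n
    have : G n = ⋂ s : ℕ, S s ⁻¹' {g | (s : ℝ) / (n + 1) - (n + 1) ≤ (wordNorm X g : ℝ)} := by
      ext ω; simp [hG]
    rw [this]
    exact MeasurableSet.iInter fun s => hmeas s (measurableSet_all _)
  have hGmono : Monotone G := by
    intro n m hnm ω hω s
    have h1 : (s : ℝ) / (n + 1) - (n + 1) ≤ (wordNorm X (S s ω) : ℝ) := hω s
    have h3 : ((n : ℝ) + 1) ≤ ((m : ℝ) + 1) := by
      have : (n : ℝ) ≤ (m : ℝ) := by exact_mod_cast hnm
      linarith
    have h2 : (s : ℝ) / (m + 1) ≤ (s : ℝ) / (n + 1) :=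
      div_le_div_of_nonneg_left (Nat.cast_nonneg s) (by positivity) h3
    show (s : ℝ) / (m + 1) - (m + 1) ≤ (wordNorm X (S s ω) : ℝ)
    linarith
  have hsub : ∀ᵐ ω ∂P, ω ∈ ⋃ n, G n := by
    filter_upwards [hspeed] with ω hω
    set L := Filter.atTop.liminf (fun t : ℕ => (wordNorm X (S t ω) : ℝ) / t) with hL
    have hbdd : Filter.atTop.IsBoundedUnder (· ≥ ·)
        (fun t : ℕ => (wordNorm X (S t ω) : ℝ) / t) :=
      isBoundedUnder_of ⟨0, fun t => div_nonneg (Nat.cast_nonneg _) (Nat.cast_nonneg _)⟩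
    have hev : ∀ᶠ t : ℕ in Filter.atTop, L / 2 < (wordNorm X (S t ω) : ℝ) / t :=
      eventually_lt_of_lt_liminf (by rw [← hL]; linarith) hbdd
    obtain ⟨T, hT⟩ := Filter.eventually_atTop.mp hev
    set m : ℕ := max (max T 1) ⌈2 / L⌉₊ with hm
    refine Set.mem_iUnion.mpr ⟨m, fun s => ?_⟩
    show (s : ℝ) / (m + 1) - (m + 1) ≤ (wordNorm X (S s ω) : ℝ)
    set N : ℝ := (m : ℝ) + 1 with hN
    have hN1 : (1 : ℝ) ≤ N := by
      have := Nat.cast_nonneg (α := ℝ) m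
      linarith
    have hNpos : (0 : ℝ) < N := by linarith
    have hTN : (T : ℝ) ≤ N := by
      have : (T : ℝ) ≤ (m : ℝ) := by
        exact_mod_cast (le_max_left T 1).trans (le_max_left _ _)
      linarith
    have hceil : (2 : ℝ) / L ≤ N := by
      have h1 : ((⌈2 / L⌉₊ : ℕ) : ℝ) ≤ (m : ℝ) := by
        exact_mod_cast le_max_right (max T 1) ⌈2 / L⌉₊
      linarith [Nat.le_ceil (2 / L)]
    by_cases hs : T ≤ s ∧ 1 ≤ s
    · have h1 := hT s hs.1
      have hs0 : (0 : ℝ) < (s : ℝ) := by exact_mod_cast hs.2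
      have h2 : L / 2 * s ≤ (wordNorm X (S s ω) : ℝ) := by
        rw [lt_div_iff₀ hs0] at h1
        nlinarith
      have h4 : (s : ℝ) / N ≤ L / 2 * s := by
        rw [div_le_iff₀ hNpos]
        have hL2 : (0 : ℝ) < L / 2 := by linarith
        have key : (L / 2 * s) * (2 / L) ≤ (L / 2 * s) * N :=
          mul_le_mul_of_nonneg_left hceil (by positivity)
        have key2 : (L / 2 * s) * (2 / L) = s := by
          field_simp
        linarith
      have h6 : (s : ℝ) / N - N ≤ (s : ℝ) / N := by linarith
      linarith
    · have hsmall : (s : ℝ) ≤ N := by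
        rcases not_and_or.mp hs with h | h
        · have h2 : (s : ℝ) < (T : ℝ) := by exact_mod_cast by omega
          linarith
        · have : s = 0 := by omega
          rw [this]; simpa using hNpos.le
      have h1 : (s : ℝ) / N ≤ N := by
        rw [div_le_iff₀ hNpos]; nlinarith
      have h2 : (s : ℝ) / N - N ≤ 0 := by linarith
      exact h2.trans (Nat.cast_nonneg _)
  have hUmeas : MeasurableSet (⋃ n, G n) := MeasurableSet.iUnion hGmeas
  have hU1 : P (⋃ n, G n) = 1 := by
    rw [← prob_compl_eq_zero_iff hUmeas]
    exact ae_iff.mp hsub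
  have hlim := tendsto_measure_iUnion_atTop (μ := P) hGmono
  rw [hU1] at hlim
  have hev : ∀ᶠ n : ℕ in Filter.atTop, 2⁻¹ ≤ P (G n) :=
    hlim.eventually_const_le (by norm_num)
  obtain ⟨n0, hn0⟩ := Filter.eventually_atTop.mp hev
  refine ⟨n0 + 1, by omega, ?_⟩
  have h := hn0 n0 le_rfl
  have heq : G n0 = {ω | ∀ s : ℕ, (s : ℝ) / ((n0 + 1 : ℕ) : ℝ) - ((n0 + 1 : ℕ) : ℝ)
      ≤ (wordNorm X (S s ω) : ℝ)} := by
    ext ω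
    constructor <;> intro h' s <;> have h'' := h' s <;> push_cast at h'' ⊢ <;> linarith
  rw [heq] at h
  exact h

end Speed

end RWaux

/-- **Linear occupation bound for walks with positive speed**
(Lyons–Peres–Sun–Zheng, Lemma 2.1).  If `S` is a random walk on a Cayley graph `G`
started at the identity `o` such that almost surely
`liminf_{t→∞} d_G(o, S_t)/t > 0`, then the occupation time `L_r = |{t ≥ 0 : S_t ∈ B(o,r)}|`
satisfies `E[L_r] ≤ C·r` for some constant `C < ∞` and all `r ≥ 1`. -/
theorem occupation_time_linear {Ω : Type*} [MeasurableSpace Ω] [MeasurableSpace Γ]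
    [MeasurableSingletonClass Γ]
    (X : Finset Γ) (hXgen : Subgroup.closure (X : Set Γ) = ⊤)
    (P : Measure Ω) [IsProbabilityMeasure P] (S : ℕ → Ω → Γ) (ν : Γ → ℝ≥0∞)
    (hwalk : IsRandomWalk P S ν)
    (hspeed : ∀ᵐ ω ∂P,
      0 < Filter.atTop.liminf (fun t : ℕ => (wordNorm (X : Set Γ) (S t ω) : ℝ) / t)) :
    ∃ C : ℝ, 0 < C ∧ ∀ r : ℕ, 1 ≤ r →
      ∫⁻ ω, (occupation (wordBall (X : Set Γ) r) S ω : ℝ≥0∞) ∂P ≤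
        ENNReal.ofReal (C * r) := by
  classical
  haveI : Countable Γ := RWaux.countable_of_gen X hXgen
  have hmeas := hwalk.1
  obtain ⟨n, hn1, hGprob⟩ := RWaux.exists_speed_event (X := (X : Set Γ)) hmeas hspeed
  refine ⟨((8 * n + 4 * n * n + 4 : ℕ) : ℝ), by positivity, ?_⟩
  intro r hr
  set K : ℕ := 2 * n * r + n * n + 1 with hK
  set Br : Set Γ := wordBall (X : Set Γ) (r : ℝ) with hBr
  set Q : ℕ → Γ → Prop :=
    fun s g => K ≤ s → (2 * (r : ℝ)) < (wordNorm (X : Set Γ) g : ℝ) with hQ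
  have hnR : (1 : ℝ) ≤ (n : ℝ) := by exact_mod_cast hn1
  have hnpos : (0 : ℝ) < (n : ℝ) := by linarith
  -- the speed event implies the escape event
  have hGsub : {ω | ∀ s : ℕ, (s : ℝ) / n - n ≤ (wordNorm (X : Set Γ) (S s ω) : ℝ)}
      ⊆ {ω | ∀ s, Q s (S s ω)} := by
    intro ω hω s hs
    have h1 := hω s
    have hKs : (K : ℝ) ≤ (s : ℝ) := by exact_mod_cast hs
    have hKval : (2 * (r : ℝ) + n) * n < (K : ℝ) := by
      rw [hK]; push_cast; nlinarith
    have h3 : 2 * (r : ℝ) + n < (s : ℝ) / n := by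
      rw [lt_div_iff₀ hnpos]; linarith
    linarith
  have hq : 2⁻¹ ≤ P {ω | ∀ s, Q s (S s ω)} :=
    le_trans hGprob (measure_mono hGsub)
  set E : ℕ → Set Ω := fun t =>
    {ω | S t ω ∈ Br} ∩ {ω | ∀ s, Q s ((S t ω)⁻¹ * S (t + s) ω)} with hE
  have hEmeas : ∀ t, MeasurableSet (E t) := by
    intro t
    refine (hmeas t (RWaux.measurableSet_all Br)).inter ?_
    have : {ω | ∀ s, Q s ((S t ω)⁻¹ * S (t + s) ω)}
        = ⋂ s, (fun ω => (S t ω)⁻¹ * S (t + s) ω) ⁻¹' {g | Q s g} := by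
      ext ω; simp
    rw [this]
    exact MeasurableSet.iInter fun s =>
      (RWaux.measurable_inv_mul (hmeas t) (hmeas (t + s))) (RWaux.measurableSet_all _)
  -- pointwise occupation bound for the events E
  have hcard : ∀ ω, (∑' t : ℕ, (E t).indicator (fun _ => (1 : ℝ≥0∞)) ω)
      ≤ ((2 * K : ℕ) : ℝ≥0∞) := by
    intro ω
    set Tw : Set ℕ := {t | ω ∈ E t} with hTw
    have hswap : ∀ t : ℕ, (E t).indicator (fun _ => (1 : ℝ≥0∞)) ω
        = Tw.indicator (fun _ => (1 : ℝ≥0∞)) t := by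
      intro t
      by_cases h : ω ∈ E t <;> simp [Set.indicator_apply, h, hTw]
    rw [tsum_congr hswap, ← RWaux.encard_eq_tsum Tw]
    -- key incompatibility claim
    have hkey : ∀ a b : ℕ, a ∈ Tw → b ∈ Tw → a + K ≤ b → False := by
      intro a b ha hb hab
      have haE : ω ∈ E a := ha
      have hbE : ω ∈ E b := hb
      obtain ⟨ha1, ha2⟩ := haE
      obtain ⟨hb1, hb2⟩ := hbE
      have hs : K ≤ b - a := by omega
      have h2r := ha2 (b - a) hs
      rw [show a + (b - a) = b by omega] at h2r
      have hna : (wordNorm (X : Set Γ) (S a ω) : ℝ) ≤ r := RWaux.wordNorm_le_of_mem ha1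
      have hnb : (wordNorm (X : Set Γ) (S b ω) : ℝ) ≤ r := RWaux.wordNorm_le_of_mem hb1
      have htri : wordNorm (X : Set Γ) ((S a ω)⁻¹ * S b ω)
          ≤ wordNorm (X : Set Γ) (S a ω) + wordNorm (X : Set Γ) (S b ω) :=
        le_trans (RWaux.wordNorm_mul_le hXgen _ _)
          (add_le_add_left (RWaux.wordNorm_inv_le hXgen _) _)
      have htriR : (wordNorm (X : Set Γ) ((S a ω)⁻¹ * S b ω) : ℝ)
          ≤ (wordNorm (X : Set Γ) (S a ω) : ℝ) + (wordNorm (X : Set Γ) (S b ω) : ℝ) := by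
        exact_mod_cast htri
      linarith
    rcases Set.eq_empty_or_nonempty Tw with hTe | ⟨t0, ht0⟩
    · simp [hTe]
    · have hsubF : Tw ⊆ ↑(Finset.Ico (t0 + 1 - K) (t0 + K)) := by
        intro t ht
        simp only [Finset.coe_Ico, Set.mem_Ico]
        constructor
        · by_contra h
          exact hkey t t0 ht ht0 (by omega)
        · by_contra h
          exact hkey t0 t ht0 ht (by omega)
      have h1 : Tw.encard ≤ ((2 * K : ℕ) : ℕ∞) := by
        refine le_trans (Set.encard_mono hsubF) ?_
        rw [Set.encard_coe_eq_coe_finsetCard]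
        have hcard' : (Finset.Ico (t0 + 1 - K) (t0 + K)).card ≤ 2 * K := by
          rw [Nat.card_Ico]; omega
        exact_mod_cast hcard'
      exact_mod_cast ENat.toENNReal_le.mpr h1
  -- sum of the probabilities of E
  have hsumE : ∑' t : ℕ, P (E t) ≤ ((2 * K : ℕ) : ℝ≥0∞) := by
    have e1 : ∀ t : ℕ, P (E t) = ∫⁻ ω, (E t).indicator (fun _ => (1 : ℝ≥0∞)) ω ∂P :=
      fun t => (lintegral_indicator_one (hEmeas t)).symm
    calc ∑' t : ℕ, P (E t)
        = ∑' t : ℕ, ∫⁻ ω, (E t).indicator (fun _ => (1 : ℝ≥0∞)) ω ∂P := tsum_congr e1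
      _ = ∫⁻ ω, ∑' t : ℕ, (E t).indicator (fun _ => (1 : ℝ≥0∞)) ω ∂P :=
          (lintegral_tsum fun t =>
            ((measurable_const.indicator (hEmeas t))).aemeasurable).symm
      _ ≤ ∫⁻ _, ((2 * K : ℕ) : ℝ≥0∞) ∂P := lintegral_mono hcard
      _ = ((2 * K : ℕ) : ℝ≥0∞) := by simp [measure_univ]
  -- lower bound P (E t) via independence
  have ha : ∀ t : ℕ, 2⁻¹ * P {ω | S t ω ∈ Br} ≤ P (E t) := by
    intro t
    have hm := RWaux.master hwalk Br Q t
    rw [hE]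
    rw [hm, mul_comm]
    exact mul_le_mul' le_rfl hq
  have hsum : ∑' t : ℕ, P {ω | S t ω ∈ Br} ≤ ((4 * K : ℕ) : ℝ≥0∞) := by
    have h1 : 2⁻¹ * ∑' t : ℕ, P {ω | S t ω ∈ Br} ≤ ((2 * K : ℕ) : ℝ≥0∞) := by
      rw [← ENNReal.tsum_mul_left]
      exact le_trans (ENNReal.tsum_le_tsum ha) hsumE
    have h2 : (2 : ℝ≥0∞) * 2⁻¹ = 1 := ENNReal.mul_inv_cancel (by norm_num) (by norm_num)
    calc ∑' t : ℕ, P {ω | S t ω ∈ Br}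
        = 2 * (2⁻¹ * ∑' t : ℕ, P {ω | S t ω ∈ Br}) := by rw [← mul_assoc, h2, one_mul]
      _ ≤ 2 * ((2 * K : ℕ) : ℝ≥0∞) := mul_le_mul' le_rfl h1
      _ = ((4 * K : ℕ) : ℝ≥0∞) := by push_cast; ring
  rw [RWaux.lintegral_occupation hmeas Br]
  refine le_trans hsum ?_
  have hnat : 4 * K ≤ (8 * n + 4 * n * n + 4) * r := by nlinarith
  calc ((4 * K : ℕ) : ℝ≥0∞) ≤ (((8 * n + 4 * n * n + 4) * r : ℕ) : ℝ≥0∞) := by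
        exact_mod_cast hnat
    _ = ENNReal.ofReal (((8 * n + 4 * n * n + 4 : ℕ) : ℝ) * r) := by
        rw [← ENNReal.ofReal_natCast]
        congr 1
        push_cast
        ring

end
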